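/- Let m ≥ 0 and n ≥ 1 be integers. A pair (c₁,c₂) ∈ ℤ² can be written as (c₁,c₂) = Σ_{i=1}^{m+n+2} δᵢ·(1,0) + Σ_{j=1}^{n+1} εⱼ·(0,1) + Σ_{k=1}^{m+1} ζ_k·(−1,0) + Σ_{l=1}^{n+1} η_l·(−1,−1) for some real numbers δᵢ, εⱼ, ζ_k, η_l all lying in the half-open interval (−1, 0], if and only if |c₁| ≤ m+n+1, |c₂| ≤ n, and |c₁ − c₂| ≤ m+n+1. -/

import Mathlib

lemma sum_Ioc_bounds {N : ℕ} (hN : 0 < N) (f : Fin N → ℝ)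
    (hf : ∀ i, f i ∈ Set.Ioc (-1 : ℝ) 0) :
    -(N : ℝ) < ∑ i, f i ∧ ∑ i, f i ≤ 0 := by
  constructor
  · have h : ∑ _i : Fin N, (-1 : ℝ) < ∑ i, f i := by
      apply Finset.sum_lt_sum_of_nonempty
      · simpa [Finset.univ_nonempty_iff] using Fin.pos_iff_nonempty.mp hN
      · intro i _; exact (hf i).1
    simpa using h
  · exact Finset.sum_nonpos fun i _ => (hf i).2

theorem stmt_4 (m n : ℕ) (hn : 1 ≤ n) (c₁ c₂ : ℤ) :
    (∃ (δ : Fin (m + n + 2) → ℝ) (ε : Fin (n + 1) → ℝ)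
        (ζ : Fin (m + 1) → ℝ) (η : Fin (n + 1) → ℝ),
      (∀ i, δ i ∈ Set.Ioc (-1 : ℝ) 0) ∧ (∀ j, ε j ∈ Set.Ioc (-1 : ℝ) 0) ∧
      (∀ k, ζ k ∈ Set.Ioc (-1 : ℝ) 0) ∧ (∀ l, η l ∈ Set.Ioc (-1 : ℝ) 0) ∧
      ((c₁ : ℝ), (c₂ : ℝ)) =
        (∑ i, δ i • ((1 : ℝ), (0 : ℝ))) + (∑ j, ε j • ((0 : ℝ), (1 : ℝ))) +
        (∑ k, ζ k • ((-1 : ℝ), (0 : ℝ))) + (∑ l, η l • ((-1 : ℝ), (-1 : ℝ)))) ↔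
    (|c₁| ≤ (m : ℤ) + n + 1 ∧ |c₂| ≤ (n : ℤ) ∧ |c₁ - c₂| ≤ (m : ℤ) + n + 1) := by
  constructor
  · rintro ⟨δ, ε, ζ, η, hδ, hε, hζ, hη, heq⟩
    obtain ⟨hδ1, hδ2⟩ := sum_Ioc_bounds (by omega) δ hδ
    obtain ⟨hε1, hε2⟩ := sum_Ioc_bounds (by omega) ε hε
    obtain ⟨hζ1, hζ2⟩ := sum_Ioc_bounds (by omega) ζ hζ
    obtain ⟨hη1, hη2⟩ := sum_Ioc_bounds (by omega) η hη
    have h1 : (c₁ : ℝ) = ∑ i, δ i - ∑ k, ζ k - ∑ l, η l := by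
      have := congrArg Prod.fst heq
      simpa [Prod.fst_sum, sub_eq_add_neg] using this
    have h2 : (c₂ : ℝ) = ∑ j, ε j - ∑ l, η l := by
      have := congrArg Prod.snd heq
      simpa [Prod.snd_sum, sub_eq_add_neg] using this
    push_cast at hδ1 hε1 hζ1 hη1
    have b1 : (c₁ : ℝ) < (m : ℝ) + n + 2 := by linarith
    have b2 : -((m : ℝ) + n + 2) < (c₁ : ℝ) := by linarith
    have b3 : (c₂ : ℝ) < (n : ℝ) + 1 := by linarith
    have b4 : -((n : ℝ) + 1) < (c₂ : ℝ) := by linarith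
    have b5 : ((c₁ : ℝ) - c₂) < (m : ℝ) + n + 2 := by linarith
    have b6 : -((m : ℝ) + n + 2) < ((c₁ : ℝ) - c₂) := by linarith
    have i1 : c₁ < (m : ℤ) + n + 2 := by exact_mod_cast b1
    have i2 : -((m : ℤ) + n + 2) < c₁ := by exact_mod_cast b2
    have i3 : c₂ < (n : ℤ) + 1 := by exact_mod_cast b3
    have i4 : -((n : ℤ) + 1) < c₂ := by exact_mod_cast b4
    have i5 : c₁ - c₂ < (m : ℤ) + n + 2 := by exact_mod_cast b5
    have i6 : -((m : ℤ) + n + 2) < c₁ - c₂ := by exact_mod_cast b6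
    refine ⟨?_, ?_, ?_⟩ <;> rw [abs_le] <;> omega
  · rintro ⟨h1, h2, h3⟩
    rw [abs_le] at h1 h2 h3
    have r1a : -((m : ℝ) + n + 1) ≤ (c₁ : ℝ) := by exact_mod_cast h1.1
    have r1b : (c₁ : ℝ) ≤ (m : ℝ) + n + 1 := by exact_mod_cast h1.2
    have r2a : -(n : ℝ) ≤ (c₂ : ℝ) := by exact_mod_cast h2.1
    have r2b : (c₂ : ℝ) ≤ (n : ℝ) := by exact_mod_cast h2.2
    have r3a : -((m : ℝ) + n + 1) ≤ (c₁ : ℝ) - c₂ := by exact_mod_cast h3.1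
    have r3b : (c₁ : ℝ) - c₂ ≤ (m : ℝ) + n + 1 := by exact_mod_cast h3.2
    set E : ℝ := max 0 (max (c₂ : ℝ) ((c₁ : ℝ) - m - 1/2)) with hE
    set B : ℝ := E - (c₂ : ℝ) with hB
    set D : ℝ := max ((c₁ : ℝ) - E) 0 with hD
    set A : ℝ := max (E - (c₁ : ℝ)) 0 with hA
    have hE0 : 0 ≤ E := le_max_left _ _
    have hEc₂ : (c₂ : ℝ) ≤ E := le_trans (le_max_left _ _) (le_max_right _ _)
    have hEc₁ : (c₁ : ℝ) - m - 1/2 ≤ E := le_trans (le_max_right _ _) (le_max_right _ _)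
    have hE1 : E < (n : ℝ) + 1 := by
      apply max_lt (by linarith) (max_lt (by linarith) (by linarith))
    have hB0 : 0 ≤ B := by simp [hB]; linarith
    have hB1 : B < (n : ℝ) + 1 := by
      have : E < (c₂ : ℝ) + ((n : ℝ) + 1) :=
        max_lt (by linarith) (max_lt (by linarith) (by linarith))
      simp [hB]; linarith
    have hD0 : 0 ≤ D := le_max_right _ _
    have hD1 : D < (m : ℝ) + 1 := max_lt (by linarith) (by linarith)
    have hA0 : 0 ≤ A := le_max_right _ _
    have hA1 : A < (m : ℝ) + n + 2 := by
      have : E < (c₁ : ℝ) + ((m : ℝ) + n + 2) :=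
        max_lt (by linarith) (max_lt (by linarith) (by linarith))
      exact max_lt (by linarith) (by linarith)
    have hDA : D - A = (c₁ : ℝ) - E := by
      rcases le_total ((c₁ : ℝ) - E) 0 with h | h
      · rw [hD, hA, max_eq_right h, max_eq_left (by linarith)]; ring
      · rw [hD, hA, max_eq_left h, max_eq_right (by linarith)]; ring
    have hNδ : (0 : ℝ) < (m : ℝ) + n + 2 := by positivity
    have hNε : (0 : ℝ) < (n : ℝ) + 1 := by positivity
    have hNζ : (0 : ℝ) < (m : ℝ) + 1 := by positivity
    refine ⟨fun _ => -A / ((m : ℝ) + n + 2), fun _ => -B / ((n : ℝ) + 1),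
      fun _ => -D / ((m : ℝ) + 1), fun _ => -E / ((n : ℝ) + 1), ?_, ?_, ?_, ?_, ?_⟩
    · intro i
      constructor
      · rw [neg_div, neg_lt_neg_iff, div_lt_one hNδ]; exact hA1
      · exact div_nonpos_of_nonpos_of_nonneg (by linarith) (by linarith)
    · intro j
      constructor
      · rw [neg_div, neg_lt_neg_iff, div_lt_one hNε]; exact hB1
      · exact div_nonpos_of_nonpos_of_nonneg (by linarith) (by linarith)
    · intro k
      constructor
      · rw [neg_div, neg_lt_neg_iff, div_lt_one hNζ]; exact hD1
      · exact div_nonpos_of_nonpos_of_nonneg (by linarith) (by linarith)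
    · intro l
      constructor
      · rw [neg_div, neg_lt_neg_iff, div_lt_one hNε]; exact hE1
      · exact div_nonpos_of_nonpos_of_nonneg (by linarith) (by linarith)
    · have key1 : (c₁ : ℝ) = -A + D + E := by linarith [hDA]
      have key2 : (c₂ : ℝ) = -B + E := by rw [hB]; ring
      rw [Prod.ext_iff]
      constructor
      · simp only [Prod.fst_sum, Prod.snd_sum, Prod.smul_mk, smul_eq_mul,
          mul_one, mul_zero, mul_neg, neg_neg, Finset.sum_const,
          Finset.card_univ, Fintype.card_fin, nsmul_eq_mul]
        push_cast
        rw [key1]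
        field_simp
        simp only [Prod.fst_add, Prod.snd_add]
        ring
      · simp only [Prod.fst_sum, Prod.snd_sum, Prod.smul_mk, smul_eq_mul,
          mul_one, mul_zero, mul_neg, neg_neg, Finset.sum_const,
          Finset.card_univ, Fintype.card_fin, nsmul_eq_mul]
        push_cast
        rw [key2]
        field_simp
        simp only [Prod.fst_add, Prod.snd_add]
        ring
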